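/- For every r ≥ 0 one has p''(r) = r(r⁴ − 2r² − 6)/((1+r²)·((1+r²)(2+r²))^{3/2}). Moreover, with r₀ = √(1+√7), one has p''(r) < 0 for 0 < r < r₀, p''(r₀) = 0, and p''(r) > 0 for r > r₀; in particular r₀ is the unique positive zero of p''. -/

import Mathlib

noncomputable def q (r : ℝ) : ℝ := Real.sqrt ((2 + r ^ 2) / (1 + r ^ 2))
noncomputable def p (r : ℝ) : ℝ := r * q r
noncomputable def r₀ : ℝ := Real.sqrt (1 + Real.sqrt 7)

noncomputable def s1 (r : ℝ) : ℝ := Real.sqrt (1 + r ^ 2)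
noncomputable def s2 (r : ℝ) : ℝ := Real.sqrt (2 + r ^ 2)

lemma hs1_pos (r : ℝ) : 0 < s1 r := Real.sqrt_pos.2 (by positivity)
lemma hs2_pos (r : ℝ) : 0 < s2 r := Real.sqrt_pos.2 (by positivity)
lemma hs1_sq (r : ℝ) : s1 r ^ 2 = 1 + r ^ 2 := Real.sq_sqrt (by positivity)
lemma hs2_sq (r : ℝ) : s2 r ^ 2 = 2 + r ^ 2 := Real.sq_sqrt (by positivity)

lemma hds1 (r : ℝ) : HasDerivAt s1 (r / s1 r) r := by
  have h : HasDerivAt (fun x : ℝ => 1 + x ^ 2) (2 * r) r := by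
    simpa using (hasDerivAt_pow 2 r).const_add 1
  have := (Real.hasDerivAt_sqrt (show (1:ℝ) + r ^ 2 ≠ 0 by positivity)).comp r h
  refine this.congr_deriv ?_; symm
  rw [show s1 r = Real.sqrt (1 + r^2) from rfl]
  field_simp

lemma hds2 (r : ℝ) : HasDerivAt s2 (r / s2 r) r := by
  have h : HasDerivAt (fun x : ℝ => 2 + x ^ 2) (2 * r) r := by
    simpa using (hasDerivAt_pow 2 r).const_add 2
  have := (Real.hasDerivAt_sqrt (show (2:ℝ) + r ^ 2 ≠ 0 by positivity)).comp r h
  refine this.congr_deriv ?_; symm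
  rw [show s2 r = Real.sqrt (2 + r^2) from rfl]
  field_simp

lemma p_eq : p = fun r => r * s2 r / s1 r := by
  funext r
  rw [p, q, s1, s2, Real.sqrt_div (by positivity)]
  ring

noncomputable def g (r : ℝ) : ℝ := (r ^ 4 + 2 * r ^ 2 + 2) / ((1 + r ^ 2) * s1 r * s2 r)
noncomputable def pp (r : ℝ) : ℝ :=
  r * (r ^ 4 - 2 * r ^ 2 - 6) / ((1 + r ^ 2) ^ 2 * (2 + r ^ 2) * s1 r * s2 r)

lemma hdp (r : ℝ) : HasDerivAt p (g r) r := by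
  rw [p_eq]
  have h := ((hasDerivAt_id r).mul (hds2 r)).div (hds1 r) (hs1_pos r).ne'
  refine h.congr_deriv ?_; symm
  simp only [Pi.mul_apply, Pi.div_apply, id]
  have h1 := hs1_sq r
  have h2 := hs2_sq r
  have h1p := (hs1_pos r).ne'
  have h2p := (hs2_pos r).ne'
  rw [g]
  field_simp
  linear_combination ((2) * r ^ 0 * s1 r ^ 0 * s2 r ^ 0 + (-1) * r ^ 0 * s1 r ^ 0 * s2 r ^ 2 + (-2) * r ^ 0 * s1 r ^ 1 * s2 r ^ 1 + (1) * r ^ 0 * s1 r ^ 1 * s2 r ^ 3 + (1) * r ^ 2 * s1 r ^ 0 * s2 r ^ 0 + (-1) * r ^ 2 * s1 r ^ 0 * s2 r ^ 2 + (-1) * r ^ 2 * s1 r ^ 1 * s2 r ^ 1 + (1) * r ^ 2 * s1 r ^ 1 * s2 r ^ 3) * h1 + ((-1) * r ^ 0 * s1 r ^ 0 * s2 r ^ 0 + (1) * r ^ 0 * s1 r ^ 1 * s2 r ^ 1 + (-1) * r ^ 2 * s1 r ^ 0 * s2 r ^ 0 + (1) * r ^ 2 * s1 r ^ 1 * s2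 r ^ 1) * h2 + (-(r^2*(2+r^2)*s1 r*s2 r)) * h1 + ((1+r^2)*r^2*s1 r*s2 r - (1+r^2)*s1 r^3*s2 r) * h2

lemma hdg (r : ℝ) : HasDerivAt g (pp r) r := by
  have h12 : HasDerivAt (fun x : ℝ => 1 + x ^ 2) (2 * r) r := by
    simpa using (hasDerivAt_pow 2 r).const_add 1
  have hu : HasDerivAt (fun x : ℝ => x ^ 4 + 2 * x ^ 2 + 2) (4 * r ^ 3 + 4 * r) r := by
    have := ((hasDerivAt_pow 4 r).add ((hasDerivAt_pow 2 r).const_mul 2)).add_const 2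
    refine this.congr_deriv ?_; symm
    push_cast; ring
  have hv := (h12.mul (hds1 r)).mul (hds2 r)
  have hvne : (1 + r ^ 2) * s1 r * s2 r ≠ 0 := by
    have := hs1_pos r; have := hs2_pos r; positivity
  have h := hu.div hv hvne
  have heq : g = fun x => (x ^ 4 + 2 * x ^ 2 + 2) / ((1 + x ^ 2) * s1 x * s2 x) := rfl
  rw [heq]
  refine h.congr_deriv ?_; symm
  simp only [Pi.mul_apply, Pi.div_apply, id]
  have h1 := hs1_sq r
  have h2 := hs2_sq r
  have h1p := (hs1_pos r).ne'
  have h2p := (hs2_pos r).ne'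
  rw [pp]
  field_simp
  linear_combination ((4) * r ^ 1 * s1 r ^ 0 * s2 r ^ 0 + (-6) * r ^ 1 * s1 r ^ 0 * s2 r ^ 2 + (-4) * r ^ 1 * s1 r ^ 1 * s2 r ^ 1 + (6) * r ^ 1 * s1 r ^ 1 * s2 r ^ 3 + (10) * r ^ 3 * s1 r ^ 0 * s2 r ^ 0 + (-10) * r ^ 3 * s1 r ^ 0 * s2 r ^ 2 + (-18) * r ^ 3 * s1 r ^ 1 * s2 r ^ 1 + (22) * r ^ 3 * s1 r ^ 1 * s2 r ^ 3 + (10) * r ^ 5 * s1 r ^ 0 * s2 r ^ 0 + (-7) * r ^ 5 * s1 r ^ 0 * s2 r ^ 2 + (-34) * r ^ 5 * s1 r ^ 1 * s2 r ^ 1 + (33) * r ^ 5 * s1 r ^ 1 * s2 r ^ 3 + (5) * r ^ 7 * s1 r ^ 0 * s2 r ^ 0 + (-2) * r ^ 7 * s1 r ^ 0 * s2 r ^ 2 + (-35) * r ^ 7 * s1 r ^ 1 * s2 r ^ 1 + (26) * r ^ 7 * s1 r ^ 1 * s2 r ^ 3 + (1) * r ^ 9 * s1 r ^ 0 * s2 r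 ^ 0 + (-21) * r ^ 9 * s1 r ^ 1 * s2 r ^ 1 + (11) * r ^ 9 * s1 r ^ 1 * s2 r ^ 3 + (-7) * r ^ 11 * s1 r ^ 1 * s2 r ^ 1 + (2) * r ^ 11 * s1 r ^ 1 * s2 r ^ 3 + (-1) * r ^ 13 * s1 r ^ 1 * s2 r ^ 1) * h1 + ((-2) * r ^ 1 * s1 r ^ 0 * s2 r ^ 0 + (2) * r ^ 1 * s1 r ^ 1 * s2 r ^ 1 + (-6) * r ^ 3 * s1 r ^ 0 * s2 r ^ 0 + (10) * r ^ 3 * s1 r ^ 1 * s2 r ^ 1 + (-7) * r ^ 5 * s1 r ^ 0 * s2 r ^ 0 + (21) * r ^ 5 * s1 r ^ 1 * s2 r ^ 1 + (-4) * r ^ 7 * s1 r ^ 0 * s2 r ^ 0 + (24) * r ^ 7 * s1 r ^ 1 * s2 r ^ 1 + (-1) * r ^ 9 * s1 r ^ 0 * s2 r ^ 0 + (16) * r ^ 9 * s1 r ^ 1 * s2 r ^ 1 + (6) * r ^ 11 * s1 r ^ 1 * s2 r ^ 1 + (1) * r ^ 13 * s1 r ^ 1 * s2 r ^ 1) * h2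 + ((4) * s1 r ^ 1 * s2 r ^ 1 * r ^ 1 + (18) * s1 r ^ 1 * s2 r ^ 1 * r ^ 3 + (34) * s1 r ^ 1 * s2 r ^ 1 * r ^ 5 + (35) * s1 r ^ 1 * s2 r ^ 1 * r ^ 7 + (21) * s1 r ^ 1 * s2 r ^ 1 * r ^ 9 + (7) * s1 r ^ 1 * s2 r ^ 1 * r ^ 11 + (1) * s1 r ^ 1 * s2 r ^ 1 * r ^ 13 + (-6) * s1 r ^ 1 * s2 r ^ 3 * r ^ 1 + (-22) * s1 r ^ 1 * s2 r ^ 3 * r ^ 3 + (-33) * s1 r ^ 1 * s2 r ^ 3 * r ^ 5 + (-26) * s1 r ^ 1 * s2 r ^ 3 * r ^ 7 + (-11) * s1 r ^ 1 * s2 r ^ 3 * r ^ 9 + (-2) * s1 r ^ 1 * s2 r ^ 3 * r ^ 11) * h1 + ((-2) * s1 r ^ 1 * s2 r ^ 1 * r ^ 1 + (-10) * s1 r ^ 1 * s2 r ^ 1 * r ^ 3 + (-21) * s1 r ^ 1 * s2 r ^ 1 * r ^ 5 + (-24) * s1 r ^ 1 * s2 r ^ 1 * r ^ 7 + (-16)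 * s1 r ^ 1 * s2 r ^ 1 * r ^ 9 + (-6) * s1 r ^ 1 * s2 r ^ 1 * r ^ 11 + (-1) * s1 r ^ 1 * s2 r ^ 1 * r ^ 13) * h2

lemma key (r : ℝ) : deriv (deriv p) r = pp r := by
  have hp1 : deriv p = g := funext fun x => (hdp x).deriv
  rw [hp1, (hdg r).deriv]

lemma sqrt7_sq : Real.sqrt 7 ^ 2 = 7 := Real.sq_sqrt (by norm_num)
lemma sqrt7_ge : 1 ≤ Real.sqrt 7 := by
  rw [show (1:ℝ) = Real.sqrt 1 by simp]
  exact Real.sqrt_le_sqrt (by norm_num)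
lemma hr0_sq : r₀ ^ 2 = 1 + Real.sqrt 7 := Real.sq_sqrt (by positivity)
lemma hr0_pos : 0 < r₀ := Real.sqrt_pos.2 (by positivity)

lemma den_pos (r : ℝ) : 0 < (1 + r ^ 2) ^ 2 * (2 + r ^ 2) * s1 r * s2 r := by
  have := hs1_pos r; have := hs2_pos r; positivity

lemma neg_part (r : ℝ) (hr : 0 < r) (hr0 : r < r₀) : deriv (deriv p) r < 0 := by
  rw [key r, pp]
  apply div_neg_of_neg_of_pos _ (den_pos r)
  have hsq : r ^ 2 < 1 + Real.sqrt 7 := by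
    calc r ^ 2 < r₀ ^ 2 := by nlinarith [hr0_pos]
    _ = 1 + Real.sqrt 7 := hr0_sq
  have ha : 0 < 1 + Real.sqrt 7 - r ^ 2 := by linarith
  have hb : 0 < Real.sqrt 7 - 1 + r ^ 2 := by nlinarith [sqrt7_ge, pow_pos hr 2]
  have : r ^ 4 - 2 * r ^ 2 - 6 < 0 := by nlinarith [mul_pos ha hb, sqrt7_sq]
  nlinarith

lemma pos_part (r : ℝ) (hr0 : r₀ < r) : 0 < deriv (deriv p) r := by
  rw [key r, pp]
  apply div_pos _ (den_pos r)
  have hrpos : 0 < r := lt_trans hr0_pos hr0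
  have hsq : 1 + Real.sqrt 7 < r ^ 2 := by
    calc (1:ℝ) + Real.sqrt 7 = r₀ ^ 2 := hr0_sq.symm
    _ < r ^ 2 := by nlinarith [hr0_pos]
  have : 0 < r ^ 4 - 2 * r ^ 2 - 6 := by nlinarith [sqrt7_sq, sqrt7_ge]
  nlinarith

lemma zero_part : deriv (deriv p) r₀ = 0 := by
  rw [key r₀, pp]
  have h4 : r₀ ^ 4 = (1 + Real.sqrt 7) ^ 2 := by
    rw [show r₀ ^ 4 = (r₀ ^ 2) ^ 2 by ring, hr0_sq]
  have h0 : r₀ ^ 4 - 2 * r₀ ^ 2 - 6 = 0 := by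
    rw [h4, hr0_sq]; linear_combination sqrt7_sq
  rw [show r₀ * (r₀ ^ 4 - 2 * r₀ ^ 2 - 6) = 0 by rw [h0, mul_zero], zero_div]

theorem stmt2 :
    (∀ r : ℝ, 0 ≤ r →
      deriv (deriv p) r =
        r * (r ^ 4 - 2 * r ^ 2 - 6) /
          ((1 + r ^ 2) * ((1 + r ^ 2) * (2 + r ^ 2)) ^ ((3 : ℝ) / 2))) ∧
    (∀ r : ℝ, 0 < r → r < r₀ → deriv (deriv p) r < 0) ∧
    deriv (deriv p) r₀ = 0 ∧
    (∀ r : ℝ, r₀ < r → 0 < deriv (deriv p) r) ∧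
    (∀ r : ℝ, 0 < r → deriv (deriv p) r = 0 → r = r₀) := by
  refine ⟨?_, neg_part, zero_part, fun r h => pos_part r h, ?_⟩
  · intro r _
    rw [key r, pp]
    have hx : (0:ℝ) < (1 + r ^ 2) * (2 + r ^ 2) := by positivity
    have hpow : ((1 + r ^ 2) * (2 + r ^ 2)) ^ ((3:ℝ)/2)
        = (1 + r ^ 2) * (2 + r ^ 2) * (s1 r * s2 r) := by
      rw [show (3:ℝ)/2 = (1:ℝ) + 1/2 by norm_num, Real.rpow_add hx, Real.rpow_one,
        ← Real.sqrt_eq_rpow, Real.sqrt_mul (by positivity), s1, s2]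
    rw [hpow]
    ring_nf
  · intro r hr hzero
    rcases lt_trichotomy r r₀ with h | h | h
    · exact absurd hzero (ne_of_lt (neg_part r hr h))
    · exact h
    · exact absurd hzero (ne_of_gt (pos_part r h))
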